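/- Let X and Y be real Banach spaces. The norm of the direct sum X ⊕₁ Y (product space with norm ‖(x,y)‖ = ‖x‖ + ‖y‖) is non rough if and only if both the norm of X and the norm of Y are non rough. -/

import Mathlib

open Metric NormedSpace ENNReal

section Defs

variable (Z : Type*) [NormedAddCommGroup Z] [NormedSpace ℝ Z]

/-- The w*-slice of the closed unit ball of the dual of `Z` determined by `z : Z` and `α > 0`:
`S(B_{Z*}, z, α) = {f ∈ B_{Z*} : f(z) > sup_{g ∈ B_{Z*}} g(z) − α}`. -/
def wStarSlice (z : Z) (α : ℝ) : Set (StrongDual ℝ Z) :=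
  {f | f ∈ closedBall (0 : StrongDual ℝ Z) 1 ∧
    f z > sSup ((fun g : StrongDual ℝ Z => g z) '' closedBall (0 : StrongDual ℝ Z) 1) - α}

/-- The norm of `Z` is `ε`-rough: every w*-slice of `B_{Z*}` has diameter at least `ε`. -/
def EpsRough (ε : ℝ) : Prop :=
  ∀ (z : Z) (α : ℝ), 0 < α → ε ≤ diam (wStarSlice Z z α)

/-- The norm of `Z` is non rough: it is not `ε`-rough for any `ε > 0`. -/
def NonRough : Prop := ∀ ε > 0, ¬ EpsRough Z ε

/-- `Z*` has the w*-Ball Dentable Property. -/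
def WStarBDP : Prop :=
  ∀ ε > 0, ∃ (z : Z) (α : ℝ), 0 < α ∧ diam (wStarSlice Z z α) < ε

/-- `V` is a (relatively) w*-open subset of the closed unit ball `B_{Z*}`. -/
def IsRelWStarOpen (V : Set (StrongDual ℝ Z)) : Prop :=
  ∃ U : Set (WeakDual ℝ Z), IsOpen U ∧
    V = {f | f ∈ closedBall (0 : StrongDual ℝ Z) 1 ∧ StrongDual.toWeakDual f ∈ U}

/-- The norm of `Z` is weakly `ε`-average rough: every nonempty relatively w*-open
subset of `B_{Z*}` has diameter at least `ε`. -/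
def WeaklyEpsAvgRough (ε : ℝ) : Prop :=
  ∀ V : Set (StrongDual ℝ Z), IsRelWStarOpen Z V → V.Nonempty → ε ≤ diam V

/-- The norm of `Z` is weakly average non rough. -/
def WeaklyAvgNonRough : Prop := ∀ ε > 0, ¬ WeaklyEpsAvgRough Z ε

/-- `Z*` has the w*-Ball Huskable Property. -/
def WStarBHP : Prop :=
  ∀ ε > 0, ∃ V : Set (StrongDual ℝ Z), IsRelWStarOpen Z V ∧ V.Nonempty ∧ diam V < ε

/-- `D` is a convex combination of w*-slices of `B_{Z*}`, i.e. `D = ∑ λᵢ Sᵢ` (Minkowski sum)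
with each `Sᵢ` a w*-slice, `λᵢ > 0`, `∑ λᵢ = 1`. -/
def IsConvexCombWStarSlices (D : Set (StrongDual ℝ Z)) : Prop :=
  ∃ (n : ℕ) (l : Fin n → ℝ) (z : Fin n → Z) (α : Fin n → ℝ),
    (∀ i, 0 < l i) ∧ (∑ i, l i) = 1 ∧ (∀ i, 0 < α i) ∧
    D = {f | ∃ g : Fin n → StrongDual ℝ Z,
      (∀ i, g i ∈ wStarSlice Z (z i) (α i)) ∧ f = ∑ i, l i • g i}

/-- The norm of `Z` is `ε`-average rough: every convex combination of w*-slices of `B_{Z*}`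
has diameter at least `ε`. -/
def EpsAvgRough (ε : ℝ) : Prop :=
  ∀ D : Set (StrongDual ℝ Z), IsConvexCombWStarSlices Z D → ε ≤ diam D

/-- The norm of `Z` is average non rough. -/
def AvgNonRough : Prop := ∀ ε > 0, ¬ EpsAvgRough Z ε

/-- `Z*` has the w*-Ball Small Combination of Slice Property. -/
def WStarBSCSP : Prop :=
  ∀ ε > 0, ∃ D : Set (StrongDual ℝ Z), IsConvexCombWStarSlices Z D ∧ diam D < ε

/-- A slice of the closed unit ball `B_Z` determined by `f ∈ Z*` and `α > 0`. -/
def ballSlice (f : StrongDual ℝ Z) (α : ℝ) : Set Z :=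
  {x | x ∈ closedBall (0 : Z) 1 ∧ f x > sSup (f '' closedBall (0 : Z) 1) - α}

/-- `Z` has the Ball Dentable Property. -/
def BDP : Prop :=
  ∀ ε > 0, ∃ (f : StrongDual ℝ Z) (α : ℝ), 0 < α ∧ diam (ballSlice Z f α) < ε

/-- `V` is a nonempty relatively weakly open subset of the closed unit ball `B_Z`. -/
def IsRelWeakOpen (V : Set Z) : Prop :=
  ∃ U : Set (WeakSpace ℝ Z), IsOpen U ∧
    V = {x | x ∈ closedBall (0 : Z) 1 ∧ toWeakSpace ℝ Z x ∈ U}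

/-- `Z` has the Ball Huskable Property. -/
def BHP : Prop :=
  ∀ ε > 0, ∃ V : Set Z, IsRelWeakOpen Z V ∧ V.Nonempty ∧ diam V < ε

/-- `D` is a convex combination of slices of `B_Z`. -/
def IsConvexCombSlices (D : Set Z) : Prop :=
  ∃ (n : ℕ) (l : Fin n → ℝ) (f : Fin n → StrongDual ℝ Z) (α : Fin n → ℝ),
    (∀ i, 0 < l i) ∧ (∑ i, l i) = 1 ∧ (∀ i, 0 < α i) ∧
    D = {x | ∃ g : Fin n → Z,
      (∀ i, g i ∈ ballSlice Z (f i) (α i)) ∧ x = ∑ i, l i • g i}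

/-- `Z` has the Ball Small Combination of Slice Property. -/
def BSCSP : Prop :=
  ∀ ε > 0, ∃ D : Set Z, IsConvexCombSlices Z D ∧ diam D < ε

variable {Z}

/-- The closed unit ball of a subspace `F` of the dual, viewed as a subset of the dual. -/
def subBall (F : Submodule ℝ (StrongDual ℝ Z)) : Set (StrongDual ℝ Z) :=
  {f | f ∈ F ∧ ‖f‖ ≤ 1}

/-- The w*-slice of `B_F` determined by `z : Z` and `α`. -/
def subWStarSlice (F : Submodule ℝ (StrongDual ℝ Z)) (z : Z) (α : ℝ) : Set (StrongDual ℝ Z) :=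
  {f | f ∈ subBall F ∧ f z > sSup ((fun g : StrongDual ℝ Z => g z) '' subBall F) - α}

/-- The subspace `F` of `Z*` has the w*-Ball Dentable Property. -/
def SubWStarBDP (F : Submodule ℝ (StrongDual ℝ Z)) : Prop :=
  ∀ ε > 0, ∃ (z : Z) (α : ℝ), 0 < α ∧ diam (subWStarSlice F z α) < ε

/-- `V` is a relatively w*-open subset of `B_F`. -/
def IsRelWStarOpenSub (F : Submodule ℝ (StrongDual ℝ Z)) (V : Set (StrongDual ℝ Z)) : Prop :=
  ∃ U : Set (WeakDual ℝ Z), IsOpen U ∧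
    V = {f | f ∈ subBall F ∧ StrongDual.toWeakDual f ∈ U}

/-- The subspace `F` of `Z*` has the w*-Ball Huskable Property. -/
def SubWStarBHP (F : Submodule ℝ (StrongDual ℝ Z)) : Prop :=
  ∀ ε > 0, ∃ V : Set (StrongDual ℝ Z), IsRelWStarOpenSub F V ∧ V.Nonempty ∧ diam V < ε

/-- `D` is a convex combination of w*-slices of `B_F`. -/
def IsConvexCombSubWStarSlices (F : Submodule ℝ (StrongDual ℝ Z)) (D : Set (StrongDual ℝ Z)) : Prop :=
  ∃ (n : ℕ) (l : Fin n → ℝ) (z : Fin n → Z) (α : Fin n → ℝ),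
    (∀ i, 0 < l i) ∧ (∑ i, l i) = 1 ∧ (∀ i, 0 < α i) ∧
    D = {f | ∃ g : Fin n → StrongDual ℝ Z,
      (∀ i, g i ∈ subWStarSlice F (z i) (α i)) ∧ f = ∑ i, l i • g i}

/-- The subspace `F` of `Z*` has the w*-Ball Small Combination of Slice Property. -/
def SubWStarBSCSP (F : Submodule ℝ (StrongDual ℝ Z)) : Prop :=
  ∀ ε > 0, ∃ D : Set (StrongDual ℝ Z), IsConvexCombSubWStarSlices F D ∧ diam D < ε

/-- The annihilator `Y^⊥ = {f ∈ Z* : f(y) = 0 for all y ∈ Y}` of a subspace `Y` of `Z`. -/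
noncomputable def annih (Y : Submodule ℝ Z) : Submodule ℝ (StrongDual ℝ Z) where
  carrier := {f | ∀ y ∈ Y, f y = 0}
  add_mem' := by intro f g hf hg y hy; simp [hf y hy, hg y hy]
  zero_mem' := by intro y hy; simp
  smul_mem' := by intro c f hf y hy; simp [hf y hy]

end Defs

section AuxProof

open Metric NormedSpace

variable {Z : Type*} [NormedAddCommGroup Z] [NormedSpace ℝ Z]

lemma sSup_dual_eval' (z : Z) :
    sSup ((fun g : StrongDual ℝ Z => g z) '' closedBall (0 : StrongDual ℝ Z) 1) = ‖z‖ := by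
  apply IsGreatest.csSup_eq
  constructor
  · obtain ⟨g, hg1, hg2⟩ := exists_dual_vector'' ℝ z
    exact ⟨g, by simpa [mem_closedBall_zero_iff] using hg1, hg2⟩
  · rintro _ ⟨f, hf, rfl⟩
    rw [mem_closedBall_zero_iff] at hf
    have h1 : f z ≤ ‖f z‖ := le_abs_self _
    have h2 : ‖f z‖ ≤ ‖f‖ * ‖z‖ := f.le_opNorm z
    nlinarith [norm_nonneg z]

lemma mem_wStarSlice_iff' {z : Z} {α : ℝ} {f : StrongDual ℝ Z} :
    f ∈ wStarSlice Z z α ↔ ‖f‖ ≤ 1 ∧ f z > ‖z‖ - α := by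
  rw [wStarSlice, Set.mem_setOf_eq, mem_closedBall_zero_iff, sSup_dual_eval']

lemma nonRough_iff' : NonRough Z ↔
    ∀ ε > 0, ∃ z α, 0 < α ∧ diam (wStarSlice Z z α) < ε := by
  unfold NonRough EpsRough
  push_neg
  rfl

variable {X Y : Type*} [NormedAddCommGroup X] [NormedSpace ℝ X]
  [NormedAddCommGroup Y] [NormedSpace ℝ Y]

lemma norm_withLp_one (z : WithLp 1 (X × Y)) : ‖z‖ = ‖z.fst‖ + ‖z.snd‖ := by
  rw [WithLp.prod_norm_eq_add (by norm_num)]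
  norm_num

end AuxProof

section AuxProof2

open Metric NormedSpace

variable {X Y : Type*} [NormedAddCommGroup X] [NormedSpace ℝ X]
  [NormedAddCommGroup Y] [NormedSpace ℝ Y]

noncomputable def fstL' : WithLp 1 (X × Y) →L[ℝ] X :=
  (ContinuousLinearMap.fst ℝ X Y).comp
    (WithLp.prodContinuousLinearEquiv 1 ℝ X Y).toContinuousLinearMap

noncomputable def sndL' : WithLp 1 (X × Y) →L[ℝ] Y :=
  (ContinuousLinearMap.snd ℝ X Y).comp
    (WithLp.prodContinuousLinearEquiv 1 ℝ X Y).toContinuousLinearMap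

noncomputable def inlL' : X →L[ℝ] WithLp 1 (X × Y) :=
  ((WithLp.prodContinuousLinearEquiv 1 ℝ X Y).symm.toContinuousLinearMap).comp
    (ContinuousLinearMap.inl ℝ X Y)

noncomputable def inrL' : Y →L[ℝ] WithLp 1 (X × Y) :=
  ((WithLp.prodContinuousLinearEquiv 1 ℝ X Y).symm.toContinuousLinearMap).comp
    (ContinuousLinearMap.inr ℝ X Y)

@[simp] lemma inlL'_apply (x : X) :
    (inlL' x : WithLp 1 (X × Y)) = (WithLp.equiv 1 (X × Y)).symm (x, 0) := rfl
@[simp] lemma inrL'_apply (y : Y) :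
    (inrL' y : WithLp 1 (X × Y)) = (WithLp.equiv 1 (X × Y)).symm (0, y) := rfl

@[simp] lemma fstL'_apply (z : WithLp 1 (X × Y)) : fstL' z = z.fst := rfl
@[simp] lemma sndL'_apply (z : WithLp 1 (X × Y)) : sndL' z = z.snd := rfl

lemma withLp_decomp (z : WithLp 1 (X × Y)) :
    z = (WithLp.equiv 1 (X × Y)).symm (z.fst, 0) + (WithLp.equiv 1 (X × Y)).symm (0, z.snd) := by
  have h := ((WithLp.prodContinuousLinearEquiv 1 ℝ X Y).symm).map_add
    ((z.fst : X), (0 : Y)) ((0 : X), z.snd)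
  simp only [WithLp.prodContinuousLinearEquiv_symm_apply] at h
  change z = WithLp.toLp 1 (z.fst, 0) + WithLp.toLp 1 (0, z.snd)
  rw [← h, Prod.mk_add_mk, add_zero, zero_add]
  rfl

end AuxProof2

set_option maxHeartbeats 1600000 in
/-- The norm of `X ⊕₁ Y` is non rough iff both the norms of `X` and `Y` are
non rough. -/
theorem statement_6 (X Y : Type*) [NormedAddCommGroup X] [NormedSpace ℝ X] [CompleteSpace X]
    [NormedAddCommGroup Y] [NormedSpace ℝ Y] [CompleteSpace Y] :
    NonRough (WithLp 1 (X × Y)) ↔ (NonRough X ∧ NonRough Y) := by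
  open Metric NormedSpace in
  rw [nonRough_iff', nonRough_iff', nonRough_iff']
  constructor
  · intro h
    constructor
    · -- NonRough X
      intro ε hε
      obtain ⟨z, α, hα, hd⟩ := h ε hε
      refine ⟨z.fst, α / 2, by linarith, ?_⟩
      obtain ⟨g₀, hg₀1, hg₀2⟩ := exists_dual_vector'' ℝ (z.snd : Y)
      -- the map sending f to φ f
      set Φ : StrongDual ℝ X → StrongDual ℝ (WithLp 1 (X × Y)) :=
        fun f => f.comp fstL' + g₀.comp sndL' with hΦ
      have hΦ_apply : ∀ (f : StrongDual ℝ X) (w : WithLp 1 (X × Y)),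
          Φ f w = f w.fst + g₀ w.snd := by intro f w; simp [hΦ]
      have hΦ_mem : ∀ f ∈ wStarSlice X z.fst (α / 2), Φ f ∈ wStarSlice (WithLp 1 (X × Y)) z α := by
        intro f hf
        rw [mem_wStarSlice_iff'] at hf ⊢
        constructor
        · refine ContinuousLinearMap.opNorm_le_bound _ zero_le_one fun w => ?_
          rw [hΦ_apply, one_mul, norm_withLp_one]
          calc ‖f w.fst + g₀ w.snd‖ ≤ ‖f w.fst‖ + ‖g₀ w.snd‖ := norm_add_le _ _
            _ ≤ ‖f‖ * ‖w.fst‖ + ‖g₀‖ * ‖w.snd‖ :=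
                add_le_add (f.le_opNorm _) (g₀.le_opNorm _)
            _ ≤ ‖w.fst‖ + ‖w.snd‖ := by
                have := norm_nonneg w.fst; have := norm_nonneg w.snd
                nlinarith [hf.1, hg₀1]
        · have hg₀2' : g₀ z.snd = ‖z.snd‖ := by exact_mod_cast hg₀2
          rw [hΦ_apply, hg₀2', norm_withLp_one]
          have := hf.2
          linarith
      have hbd : Bornology.IsBounded (wStarSlice (WithLp 1 (X × Y)) z α) :=
        (isBounded_closedBall (x := (0 : StrongDual ℝ (WithLp 1 (X × Y)))) (r := 1)).subset
          (fun f hf => hf.1)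
      refine lt_of_le_of_lt ?_ hd
      refine diam_le_of_forall_dist_le diam_nonneg ?_
      intro f₁ hf₁ f₂ hf₂
      have key : dist f₁ f₂ ≤ dist (Φ f₁) (Φ f₂) := by
        rw [dist_eq_norm, dist_eq_norm]
        refine ContinuousLinearMap.opNorm_le_bound _ (norm_nonneg _) fun x => ?_
        have hx : (f₁ - f₂) x = (Φ f₁ - Φ f₂) ((WithLp.equiv 1 (X × Y)).symm (x, 0)) := by
          simp [hΦ_apply]
        rw [hx]
        calc ‖(Φ f₁ - Φ f₂) ((WithLp.equiv 1 (X × Y)).symm (x, 0))‖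
            ≤ ‖Φ f₁ - Φ f₂‖ * ‖(WithLp.equiv 1 (X × Y)).symm ((x : X), (0 : Y))‖ :=
              ContinuousLinearMap.le_opNorm _ _
          _ = ‖Φ f₁ - Φ f₂‖ * ‖x‖ := by rw [norm_withLp_one]; simp
      exact key.trans (dist_le_diam_of_mem hbd (hΦ_mem _ hf₁) (hΦ_mem _ hf₂))
    · -- NonRough Y
      intro ε hε
      obtain ⟨z, α, hα, hd⟩ := h ε hε
      refine ⟨z.snd, α / 2, by linarith, ?_⟩
      obtain ⟨g₀, hg₀1, hg₀2⟩ := exists_dual_vector'' ℝ (z.fst : X)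
      set Φ : StrongDual ℝ Y → StrongDual ℝ (WithLp 1 (X × Y)) :=
        fun f => g₀.comp fstL' + f.comp sndL' with hΦ
      have hΦ_apply : ∀ (f : StrongDual ℝ Y) (w : WithLp 1 (X × Y)),
          Φ f w = g₀ w.fst + f w.snd := by intro f w; simp [hΦ]
      have hΦ_mem : ∀ f ∈ wStarSlice Y z.snd (α / 2), Φ f ∈ wStarSlice (WithLp 1 (X × Y)) z α := by
        intro f hf
        rw [mem_wStarSlice_iff'] at hf ⊢
        constructor
        · refine ContinuousLinearMap.opNorm_le_bound _ zero_le_one fun w => ?_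
          rw [hΦ_apply, one_mul, norm_withLp_one]
          calc ‖g₀ w.fst + f w.snd‖ ≤ ‖g₀ w.fst‖ + ‖f w.snd‖ := norm_add_le _ _
            _ ≤ ‖g₀‖ * ‖w.fst‖ + ‖f‖ * ‖w.snd‖ :=
                add_le_add (g₀.le_opNorm _) (f.le_opNorm _)
            _ ≤ ‖w.fst‖ + ‖w.snd‖ := by
                have := norm_nonneg w.fst; have := norm_nonneg w.snd
                nlinarith [hf.1, hg₀1]
        · have hg₀2' : g₀ z.fst = ‖z.fst‖ := by exact_mod_cast hg₀2
          rw [hΦ_apply, hg₀2', norm_withLp_one]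
          have := hf.2
          linarith
      have hbd : Bornology.IsBounded (wStarSlice (WithLp 1 (X × Y)) z α) :=
        (isBounded_closedBall (x := (0 : StrongDual ℝ (WithLp 1 (X × Y)))) (r := 1)).subset
          (fun f hf => hf.1)
      refine lt_of_le_of_lt ?_ hd
      refine diam_le_of_forall_dist_le diam_nonneg ?_
      intro f₁ hf₁ f₂ hf₂
      have key : dist f₁ f₂ ≤ dist (Φ f₁) (Φ f₂) := by
        rw [dist_eq_norm, dist_eq_norm]
        refine ContinuousLinearMap.opNorm_le_bound _ (norm_nonneg _) fun y => ?_
        have hx : (f₁ - f₂) y = (Φ f₁ - Φ f₂) ((WithLp.equiv 1 (X × Y)).symm (0, y)) := by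
          simp [hΦ_apply]
        rw [hx]
        calc ‖(Φ f₁ - Φ f₂) ((WithLp.equiv 1 (X × Y)).symm (0, y))‖
            ≤ ‖Φ f₁ - Φ f₂‖ * ‖(WithLp.equiv 1 (X × Y)).symm ((0 : X), (y : Y))‖ :=
              ContinuousLinearMap.le_opNorm _ _
          _ = ‖Φ f₁ - Φ f₂‖ * ‖y‖ := by rw [norm_withLp_one]; simp
      exact key.trans (dist_le_diam_of_mem hbd (hΦ_mem _ hf₁) (hΦ_mem _ hf₂))
  · rintro ⟨hX, hY⟩ ε hε
    obtain ⟨x, α, hα, hdX⟩ := hX (ε / 2) (by linarith)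
    obtain ⟨y, β, hβ, hdY⟩ := hY (ε / 2) (by linarith)
    set γ := min α β with hγdef
    have hγ : 0 < γ := lt_min hα hβ
    refine ⟨(WithLp.equiv 1 (X × Y)).symm (x, y), γ, hγ, ?_⟩
    set z : WithLp 1 (X × Y) := (WithLp.equiv 1 (X × Y)).symm (x, y) with hz
    have hzfst : z.fst = x := rfl
    have hzsnd : z.snd = y := rfl
    have hznorm : ‖z‖ = ‖x‖ + ‖y‖ := by rw [norm_withLp_one, hzfst, hzsnd]
    have hcomp : ∀ φ ∈ wStarSlice (WithLp 1 (X × Y)) z γ,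
        φ.comp (inlL' (X := X) (Y := Y)) ∈ wStarSlice X x α ∧
        φ.comp (inrL' (X := X) (Y := Y)) ∈ wStarSlice Y y β := by
      intro φ hφ
      rw [mem_wStarSlice_iff'] at hφ
      obtain ⟨hφ1, hφ2⟩ := hφ
      have hdec : φ z = φ.comp (inlL' (X := X) (Y := Y)) x
          + φ.comp (inrL' (X := X) (Y := Y)) y := by
        conv_lhs => rw [withLp_decomp z]
        rw [map_add, hzfst, hzsnd]
        rfl
      have hnf : ‖φ.comp (inlL' (X := X) (Y := Y))‖ ≤ 1 := by
        refine ContinuousLinearMap.opNorm_le_bound _ zero_le_one fun u => ?_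
        rw [one_mul]
        calc ‖φ.comp (inlL' (X := X) (Y := Y)) u‖
            = ‖φ ((WithLp.equiv 1 (X × Y)).symm ((u : X), (0 : Y)))‖ := rfl
          _ ≤ ‖φ‖ * ‖(WithLp.equiv 1 (X × Y)).symm ((u : X), (0 : Y))‖ := φ.le_opNorm _
          _ ≤ ‖u‖ := by
              rw [norm_withLp_one]
              change ‖φ‖ * (‖u‖ + ‖(0 : Y)‖) ≤ ‖u‖
              simp only [norm_zero, add_zero]
              nlinarith [norm_nonneg u]
      have hng : ‖φ.comp (inrL' (X := X) (Y := Y))‖ ≤ 1 := by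
        refine ContinuousLinearMap.opNorm_le_bound _ zero_le_one fun u => ?_
        rw [one_mul]
        calc ‖φ.comp (inrL' (X := X) (Y := Y)) u‖
            = ‖φ ((WithLp.equiv 1 (X × Y)).symm ((0 : X), (u : Y)))‖ := rfl
          _ ≤ ‖φ‖ * ‖(WithLp.equiv 1 (X × Y)).symm ((0 : X), (u : Y))‖ := φ.le_opNorm _
          _ ≤ ‖u‖ := by
              rw [norm_withLp_one]
              change ‖φ‖ * (‖(0 : X)‖ + ‖u‖) ≤ ‖u‖
              simp only [norm_zero, zero_add]
              nlinarith [norm_nonneg u]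
      have hfx : φ.comp (inlL' (X := X) (Y := Y)) x ≤ ‖x‖ := by
        have h0 := (φ.comp (inlL' (X := X) (Y := Y))).le_opNorm x
        have h1 : φ.comp (inlL' (X := X) (Y := Y)) x
            ≤ ‖φ.comp (inlL' (X := X) (Y := Y)) x‖ := le_abs_self _
        nlinarith [norm_nonneg x]
      have hgy : φ.comp (inrL' (X := X) (Y := Y)) y ≤ ‖y‖ := by
        have h0 := (φ.comp (inrL' (X := X) (Y := Y))).le_opNorm y
        have h1 : φ.comp (inrL' (X := X) (Y := Y)) y
            ≤ ‖φ.comp (inrL' (X := X) (Y := Y)) y‖ := le_abs_self _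
        nlinarith [norm_nonneg y]
      have hγα : γ ≤ α := min_le_left _ _
      have hγβ : γ ≤ β := min_le_right _ _
      rw [hznorm, hdec] at hφ2
      constructor
      · rw [mem_wStarSlice_iff']; exact ⟨hnf, by linarith⟩
      · rw [mem_wStarSlice_iff']; exact ⟨hng, by linarith⟩
    have hbdX : Bornology.IsBounded (wStarSlice X x α) :=
      (isBounded_closedBall (x := (0 : StrongDual ℝ X)) (r := 1)).subset (fun f hf => hf.1)
    have hbdY : Bornology.IsBounded (wStarSlice Y y β) :=
      (isBounded_closedBall (x := (0 : StrongDual ℝ Y)) (r := 1)).subset (fun f hf => hf.1)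
    have hle : diam (wStarSlice (WithLp 1 (X × Y)) z γ)
        ≤ diam (wStarSlice X x α) + diam (wStarSlice Y y β) := by
      refine diam_le_of_forall_dist_le (by positivity) ?_
      intro φ₁ hφ₁ φ₂ hφ₂
      obtain ⟨hf₁, hg₁⟩ := hcomp φ₁ hφ₁
      obtain ⟨hf₂, hg₂⟩ := hcomp φ₂ hφ₂
      have hnorm : ‖φ₁ - φ₂‖
          ≤ ‖φ₁.comp (inlL' (X := X) (Y := Y)) - φ₂.comp (inlL' (X := X) (Y := Y))‖
          + ‖φ₁.comp (inrL' (X := X) (Y := Y)) - φ₂.comp (inrL' (X := X) (Y := Y))‖ := by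
        refine ContinuousLinearMap.opNorm_le_bound _ (by positivity) fun w => ?_
        have hdec : (φ₁ - φ₂) w
            = (φ₁.comp (inlL' (X := X) (Y := Y)) - φ₂.comp (inlL' (X := X) (Y := Y))) w.fst
            + (φ₁.comp (inrL' (X := X) (Y := Y)) - φ₂.comp (inrL' (X := X) (Y := Y))) w.snd := by
          simp only [ContinuousLinearMap.sub_apply, ContinuousLinearMap.comp_apply,
            inlL'_apply, inrL'_apply]
          have d1 : φ₁ w = φ₁ ((WithLp.equiv 1 (X × Y)).symm (w.fst, 0))
              + φ₁ ((WithLp.equiv 1 (X × Y)).symm (0, w.snd)) := by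
            conv_lhs => rw [withLp_decomp w]; rw [map_add]
          have d2 : φ₂ w = φ₂ ((WithLp.equiv 1 (X × Y)).symm (w.fst, 0))
              + φ₂ ((WithLp.equiv 1 (X × Y)).symm (0, w.snd)) := by
            conv_lhs => rw [withLp_decomp w]; rw [map_add]
          rw [d1, d2]
          ring
        rw [hdec, norm_withLp_one]
        calc ‖(φ₁.comp (inlL' (X := X) (Y := Y)) - φ₂.comp (inlL' (X := X) (Y := Y))) w.fst
              + (φ₁.comp (inrL' (X := X) (Y := Y)) - φ₂.comp (inrL' (X := X) (Y := Y))) w.snd‖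
            ≤ ‖(φ₁.comp (inlL' (X := X) (Y := Y)) - φ₂.comp (inlL' (X := X) (Y := Y))) w.fst‖
              + ‖(φ₁.comp (inrL' (X := X) (Y := Y)) - φ₂.comp (inrL' (X := X) (Y := Y))) w.snd‖ :=
              norm_add_le _ _
          _ ≤ ‖φ₁.comp (inlL' (X := X) (Y := Y)) - φ₂.comp (inlL' (X := X) (Y := Y))‖ * ‖w.fst‖
              + ‖φ₁.comp (inrL' (X := X) (Y := Y)) - φ₂.comp (inrL' (X := X) (Y := Y))‖ * ‖w.snd‖ :=
              add_le_add (ContinuousLinearMap.le_opNorm _ _) (ContinuousLinearMap.le_opNorm _ _)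
          _ ≤ (‖φ₁.comp (inlL' (X := X) (Y := Y)) - φ₂.comp (inlL' (X := X) (Y := Y))‖
              + ‖φ₁.comp (inrL' (X := X) (Y := Y)) - φ₂.comp (inrL' (X := X) (Y := Y))‖)
              * (‖w.fst‖ + ‖w.snd‖) := by
              nlinarith [norm_nonneg (φ₁.comp (inlL' (X := X) (Y := Y)) - φ₂.comp (inlL' (X := X) (Y := Y))),
                norm_nonneg (φ₁.comp (inrL' (X := X) (Y := Y)) - φ₂.comp (inrL' (X := X) (Y := Y))),
                norm_nonneg w.fst, norm_nonneg w.snd]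
      calc dist φ₁ φ₂ = ‖φ₁ - φ₂‖ := dist_eq_norm _ _
        _ ≤ ‖φ₁.comp (inlL' (X := X) (Y := Y)) - φ₂.comp (inlL' (X := X) (Y := Y))‖
            + ‖φ₁.comp (inrL' (X := X) (Y := Y)) - φ₂.comp (inrL' (X := X) (Y := Y))‖ := hnorm
        _ = dist (φ₁.comp (inlL' (X := X) (Y := Y))) (φ₂.comp (inlL' (X := X) (Y := Y)))
            + dist (φ₁.comp (inrL' (X := X) (Y := Y))) (φ₂.comp (inrL' (X := X) (Y := Y))) := by
            rw [dist_eq_norm, dist_eq_norm]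
        _ ≤ diam (wStarSlice X x α) + diam (wStarSlice Y y β) :=
            add_le_add (dist_le_diam_of_mem hbdX hf₁ hf₂) (dist_le_diam_of_mem hbdY hg₁ hg₂)
    calc diam (wStarSlice (WithLp 1 (X × Y)) z γ)
        ≤ diam (wStarSlice X x α) + diam (wStarSlice Y y β) := hle
      _ < ε / 2 + ε / 2 := add_lt_add hdX hdY
      _ = ε := by ring
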